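/- Let q ≥ 3 and n ≥ 3. For every w ∈ C_q(n) and every w' ∈ A_q(n) ∪ B_q(n), no nonempty proper prefix of w is equal to a suffix of w'. -/
import Mathlib


/-- Value of a letter: 1 ↦ +1, 0 ↦ -1, other letters ↦ 0. -/
def mval (a : ℕ) : ℤ := if a = 1 then 1 else if a = 0 then -1 else 0

/-- Value-sum of a word. -/
def vsum (w : List ℕ) : ℤ := (w.map mval).sum

/-- A (q-2)-colored Motzkin word over the alphabet Z_q = {0,...,q-1}:
all letters < q, every prefix has nonnegative value-sum, total value-sum 0. -/
def IsMotzkinWord (q : ℕ) (w : List ℕ) : Prop :=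
  (∀ a ∈ w, a < q) ∧ (∀ u, u <+: w → 0 ≤ vsum u) ∧ vsum w = 0

/-- The set 𝓜_{q-2}(n) of (q-2)-colored Motzkin words of length n. -/
def MotzkinSet (q n : ℕ) : Set (List ℕ) := {w | w.length = n ∧ IsMotzkinWord q w}

/-- M_{q-2}(n), the number of (q-2)-colored Motzkin words of length n. -/
noncomputable def Mnum (q n : ℕ) : ℕ := (MotzkinSet q n).ncard

/-- The set Ê_{q-2}(n) of elevated (q-2)-colored Motzkin words of length n:
words 1α0 with α ∈ 𝓜_{q-2}(n-2). -/
def ElevatedSet (q n : ℕ) : Set (List ℕ) :=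
  {w | w.length = n ∧ ∃ α ∈ MotzkinSet q (n - 2), w = 1 :: (α ++ [0])}

/-- The set A_q(n). -/
def SetA (q n : ℕ) : Set (List ℕ) :=
  {w | ∃ i ≤ n / 2, ∃ α ∈ MotzkinSet q i, ∃ β ∈ ElevatedSet q (n - i), w = α ++ β} \
    {w | ∃ α ∈ ElevatedSet q (n / 2), ∃ β ∈ ElevatedSet q (n / 2), w = α ++ β}

/-- The set B_q(n). -/
def SetB (q n : ℕ) : Set (List ℕ) :=
  {w | ∃ i ≤ n / 2 - 1, ∃ α ∈ MotzkinSet q i, ∃ β ∈ ElevatedSet q (n - i - 1),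
    w = 1 :: (α ++ β)}

/-- The set C_q(n): words γ0 with γ a (q-2)-colored Motzkin word of length n-1
having no factor which is an elevated Motzkin word of length j ≥ ⌈n/2⌉. -/
def SetC (q n : ℕ) : Set (List ℕ) :=
  {w | ∃ γ ∈ MotzkinSet q (n - 1),
    (∀ j, (n + 1) / 2 ≤ j → ∀ β ∈ ElevatedSet q j, ¬ β <:+: γ) ∧ w = γ ++ [0]}

/-- The cross-bifix-free candidate set CBFS_q(n). -/
def CBFS (q n : ℕ) : Set (List ℕ) := SetA q n ∪ SetB q n ∪ SetC q n

/-- A word is bifix-free if no nonempty proper prefix of it is also a suffix of it. -/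
def BifixFree (w : List ℕ) : Prop :=
  ∀ u, u <+: w → u ≠ [] → u.length < w.length → ¬ u <:+ w

/-- BF_q(n): the set of bifix-free words of length n over Z_q. -/
def BF (q n : ℕ) : Set (List ℕ) := {w | w.length = n ∧ (∀ a ∈ w, a < q) ∧ BifixFree w}

/-- F_{k,q}(n): the number of words of length n over Z_q avoiding k consecutive 0's. -/
noncomputable def Fcount (k q n : ℕ) : ℕ :=
  {w : List ℕ | w.length = n ∧ (∀ a ∈ w, a < q) ∧ ¬ List.replicate k 0 <:+: w}.ncard

/-- The set S_{k,q}(n) of Bajic--Stojanovic--Chee--Kiah type words: words s of length n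
over Z_q with s₁ = ⋯ = s_k = 0, s_{k+1} ≠ 0, s_n ≠ 0, and such that the subword
s_{k+2} ⋯ s_{n-1} contains no k consecutive 0's. -/
def SetS (q k n : ℕ) : Set (List ℕ) :=
  {s | s.length = n ∧ (∀ a ∈ s, a < q) ∧ s.take k = List.replicate k 0 ∧
    s.getD k 0 ≠ 0 ∧ s.getLast? ≠ some 0 ∧
    ¬ List.replicate k 0 <:+: (s.drop (k + 1)).take (n - k - 2)}

lemma vsum_append (a b : List ℕ) : vsum (a ++ b) = vsum a + vsum b := by
  simp [vsum]

lemma vsum_suffix_neg {q j : ℕ} {β u : List ℕ} (hβ : β ∈ ElevatedSet q j)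
    (hu : u <:+ β) (hne : u ≠ []) (hlt : u.length < β.length) : vsum u < 0 := by
  obtain ⟨hlen, α, hα, rfl⟩ := hβ
  obtain ⟨p, hp⟩ := hu
  cases p with
  | nil => simp at hp; subst hp; simp at hlt
  | cons a p' =>
    have hp' : p' ++ u = α ++ [0] := by
      have := congrArg List.tail hp; simpa using this
    have hup : 0 < u.length := List.length_pos_iff.mpr hne
    have hple : p'.length ≤ α.length := by
      have := congrArg List.length hp'; simp at this; omega
    have hp'α : p' <+: α :=
      List.prefix_of_prefix_length_le ⟨u, hp'⟩ (List.prefix_append α [0]) hple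
    have h1 : 0 ≤ vsum p' := hα.2.2.1 p' hp'α
    have h2 : vsum p' + vsum u = vsum α + vsum [0] := by
      rw [← vsum_append, ← vsum_append, hp']
    have h3 : vsum α = 0 := hα.2.2.2
    have h4 : vsum [0] = -1 := by simp [vsum, mval]
    omega

/-- For w ∈ C_q(n) and w' ∈ A_q(n) ∪ B_q(n), no nonempty proper prefix of
w equals a suffix of w'. -/
theorem setC_vs_setAB_no_cross_bifix (q n : ℕ) (hq : 3 ≤ q) (hn : 3 ≤ n)
    (w w' : List ℕ) (hw : w ∈ SetC q n) (hw' : w' ∈ SetA q n ∪ SetB q n) :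
    ∀ u, u <+: w → u ≠ [] → u.length < w.length → ¬ u <:+ w' := by
  intro u hupre hune hult hus
  obtain ⟨γ, hγ, hC, rfl⟩ := hw
  have hγlen : γ.length = n - 1 := hγ.1
  have hulen : u.length ≤ γ.length := by
    simp at hult; omega
  have huγ : u <+: γ :=
    List.prefix_of_prefix_length_le hupre (List.prefix_append γ [0]) hulen
  obtain ⟨j, β, hj, hβ, hβw'⟩ :
      ∃ j β, (n + 1) / 2 ≤ j ∧ β ∈ ElevatedSet q j ∧ β <:+ w' := by
    rcases hw' with hA | hB
    · obtain ⟨⟨i, hi, α, hα, β, hβ, rfl⟩, -⟩ := hA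
      exact ⟨n - i, β, by omega, hβ, List.suffix_append α β⟩
    · obtain ⟨i, hi, α, hα, β, hβ, rfl⟩ := hB
      refine ⟨n - i - 1, β, by omega, hβ, ⟨1 :: α, by simp⟩⟩
  rcases le_or_gt β.length u.length with hle | hlt2
  · have hβu : β <:+ u := List.suffix_of_suffix_length_le hβw' hus hle
    exact hC j hj β hβ (hβu.isInfix.trans huγ.isInfix)
  · have huβ : u <:+ β := List.suffix_of_suffix_length_le hus hβw' (le_of_lt hlt2)
    have hneg : vsum u < 0 := vsum_suffix_neg hβ huβ hune hlt2
    have hpos : 0 ≤ vsum u := hγ.2.2.1 u huγ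
    omega
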